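/- For a finite group G, the sum over all triples of irreducible complex characters (ρ, φ, ψ) of the square of the Kronecker multiplicity g(ρ,φ,ψ) = ⟨ρ·φ·ψ̄, 1⟩ equals the sum over conjugacy classes α of G of the centralizer size z_α = |C_G(x)| for x ∈ α. -/

import Mathlib

open Complex

noncomputable def charInner (G : Type) [Group G] [Fintype G] (φ ψ : G → ℂ) : ℂ :=
  (Fintype.card G : ℂ)⁻¹ * ∑ x : G, φ x * (starRingEnd ℂ) (ψ x)

/-- `χ` is the character of some irreducible complex representation of `G`. -/
def IsIrrChar (G : Type) [Group G] (χ : G → ℂ) : Prop :=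
  ∃ V : FDRep ℂ G, CategoryTheory.Simple V ∧ χ = V.character

/-- Kronecker multiplicity `g(ρ,φ,ψ) = ⟨φ·ψ, ρ⟩`. -/
noncomputable def kron (G : Type) [Group G] [Fintype G] (ρ φ ψ : G → ℂ) : ℂ :=
  charInner G (fun x => φ x * ψ x) ρ

section StmtAux

open CategoryTheory MonoidAlgebra
open scoped Classical

set_option linter.unusedSectionVars false

variable {G : Type} [Group G] [Fintype G] [DecidableEq G]

noncomputable def smulRep (G : Type) [Group G] (S : Type) [AddCommGroup S] [Module ℂ S] [Module (MonoidAlgebra ℂ G) S]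
    [IsScalarTower ℂ (MonoidAlgebra ℂ G) S] : Representation ℂ G S where
  toFun g :=
    { toFun := fun x => (single g (1 : ℂ) : MonoidAlgebra ℂ G) • x
      map_add' := fun x y => smul_add _ x y
      map_smul' := fun c x => (smul_comm _ c x) }
  map_one' := by
    ext x
    show (single (1:G) (1:ℂ) : MonoidAlgebra ℂ G) • x = x
    rw [show (single (1:G) (1:ℂ) : MonoidAlgebra ℂ G) = 1 from rfl, one_smul]
  map_mul' g h := by
    ext x
    show (single (g*h) (1:ℂ) : MonoidAlgebra ℂ G) • x = _
    rw [show (single (g*h) (1:ℂ) : MonoidAlgebra ℂ G)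
        = single g 1 * single h 1 by rw [MonoidAlgebra.single_mul_single, one_mul], mul_smul]
    rfl


lemma smulRep_apply (S : Type) [AddCommGroup S] [Module ℂ S] [Module (MonoidAlgebra ℂ G) S]
    [IsScalarTower ℂ (MonoidAlgebra ℂ G) S] (g : G) (x : S) :
    smulRep G S g x = (single g (1 : ℂ) : MonoidAlgebra ℂ G) • x := rfl

lemma smul_apply_eq_sum (S : Type) [AddCommGroup S] [Module ℂ S]
    [Module (MonoidAlgebra ℂ G) S] [IsScalarTower ℂ (MonoidAlgebra ℂ G) S]
    [Fintype G] [DecidableEq G]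
    (a : MonoidAlgebra ℂ G) (x : S) :
    a • x = ∑ g : G, a.coeff g • ((single g (1:ℂ) : MonoidAlgebra ℂ G) • x) := by
  have h1 : a = ∑ g : G, (single g (a.coeff g) : MonoidAlgebra ℂ G) := by
    ext h
    rw [MonoidAlgebra.coeff_sum, Finsupp.finset_sum_apply]
    simp [Finsupp.single_apply]
  calc a • x = (∑ g : G, (single g (a.coeff g) : MonoidAlgebra ℂ G)) • x := by rw [← h1]
    _ = ∑ g : G, (single g (a.coeff g) : MonoidAlgebra ℂ G) • x := Finset.sum_smul
    _ = ∑ g : G, a.coeff g • ((single g (1:ℂ) : MonoidAlgebra ℂ G) • x) := by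
        refine Finset.sum_congr rfl fun g _ => ?_
        rw [← smul_assoc, MonoidAlgebra.smul_single', mul_one]


lemma simple_smulRep (S : Type) [AddCommGroup S] [Module ℂ S] [Module (MonoidAlgebra ℂ G) S]
    [IsScalarTower ℂ (MonoidAlgebra ℂ G) S] [FiniteDimensional ℂ S]
    [IsSimpleModule (MonoidAlgebra ℂ G) S] :
    Simple (FDRep.of (smulRep G S)) := by
  haveI : Nontrivial S := IsSimpleModule.nontrivial (MonoidAlgebra ℂ G) S
  constructor
  intro Y f hmono
  have hcomm : ∀ (g : G) (y : Y.V), (f.hom.hom.hom : Y.V →ₗ[ℂ] S) (Y.ρ g y)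
      = smulRep G S g ((f.hom.hom.hom : Y.V →ₗ[ℂ] S) y) := by
    intro g y
    have h2 := f.comm g
    have h3 := LinearMap.congr_fun (congrArg (fun t => t.hom.hom) h2) y
    exact h3
  set φ : Y.V →ₗ[ℂ] S := (f.hom.hom.hom : Y.V →ₗ[ℂ] S) with hφdef
  constructor
  · intro hiso h0
    have hid : (𝟙 (FDRep.of (smulRep G S)) : _ ⟶ _) = 0 := by
      calc (𝟙 (FDRep.of (smulRep G S)) : _ ⟶ _) = inv f ≫ f := (IsIso.inv_hom_id f).symm
        _ = inv f ≫ 0 := congrArg (fun t => inv f ≫ t) h0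
        _ = 0 := Limits.comp_zero
    obtain ⟨x, hx⟩ := exists_ne (0 : S)
    apply hx
    have := congrArg Action.Hom.hom hid
    simpa using LinearMap.congr_fun (congrArg (fun t => t.hom.hom) this) x
  · intro hne
    -- the range of φ is a MonoidAlgebra-submodule
    have hsmulmem : ∀ (a : MonoidAlgebra ℂ G) (x : S), x ∈ Set.range φ → a • x ∈ Set.range φ := by
      rintro a x ⟨y, rfl⟩
      refine ⟨∑ g : G, a.coeff g • Y.ρ g y, ?_⟩
      rw [map_sum, smul_apply_eq_sum]
      refine Finset.sum_congr rfl fun g _ => ?_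
      rw [map_smul]
      exact congrArg (fun t => a.coeff g • t) ((hcomm g y).trans (smulRep_apply S g (φ y)))
    set p : Submodule (MonoidAlgebra ℂ G) S :=
      { carrier := Set.range φ
        add_mem' := by rintro x y ⟨u, rfl⟩ ⟨v, rfl⟩; exact ⟨u + v, map_add _ _ _⟩
        zero_mem' := ⟨0, map_zero _⟩
        smul_mem' := fun a x hx => hsmulmem a x hx } with hp
    rcases eq_bot_or_eq_top p with hbot | htop
    · exfalso
      apply hne
      have hz : ∀ y : Y.V, φ y = 0 := by
        intro y
        have : φ y ∈ p := ⟨y, rfl⟩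
        rw [hbot] at this
        simpa using this
      ext y
      exact (hz y).trans (by simp)
    · have hsurj : Function.Surjective φ := by
        intro x
        have : x ∈ p := htop ▸ Submodule.mem_top
        exact this
      -- injectivity from Mono via the kernel subrepresentation
      have hstab : ∀ (g : G), ∀ y ∈ LinearMap.ker φ, Y.ρ g y ∈ LinearMap.ker φ := by
        intro g y hy
        rw [LinearMap.mem_ker] at hy ⊢
        exact (hcomm g y).trans ((congrArg (smulRep G S g) hy).trans (map_zero _))
      let ρK : Representation ℂ G (LinearMap.ker φ) :=
        { toFun := fun g => (Y.ρ g).restrict (hstab g)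
          map_one' := LinearMap.ext fun y => Subtype.ext
            (show (Y.ρ 1) y.1 = y.1 by rw [map_one]; rfl)
          map_mul' := fun g h => LinearMap.ext fun y => Subtype.ext
            (show (Y.ρ (g * h)) y.1 = (Y.ρ g) ((Y.ρ h) y.1) by rw [map_mul]; rfl) }
      let ι : FDRep.of ρK ⟶ Y := ⟨FGModuleCat.ofHom (LinearMap.ker φ).subtype, fun g => by ext x; rfl⟩
      have h0' : ι ≫ f = (0 : FDRep.of ρK ⟶ Y) ≫ f := by
        rw [Limits.zero_comp]
        ext x
        simp
        exact x.2
      have hι := hmono.right_cancellation ι 0 h0'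
      have hker : ∀ x : LinearMap.ker φ, (x : Y.V) = 0 := by
        intro x
        have := congrArg Action.Hom.hom hι
        exact (LinearMap.congr_fun (congrArg (fun t => t.hom.hom) this) x).trans (by simp : ((0 : FDRep.of ρK ⟶ Y).hom.hom.hom x : Y.V) = 0)
      have hinj : Function.Injective φ := by
        rw [← LinearMap.ker_eq_bot]
        exact (Submodule.eq_bot_iff _).2 fun y hy => hker ⟨y, hy⟩
      let e := LinearEquiv.ofBijective φ ⟨hinj, hsurj⟩
      have hginv : ∀ (g : G) (x : S), e.symm (smulRep G S g x) = Y.ρ g (e.symm x) := by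
        intro g x
        apply hinj
        calc φ (e.symm (smulRep G S g x)) = smulRep G S g x := e.apply_symm_apply _
          _ = smulRep G S g (φ (e.symm x)) :=
              (congrArg (smulRep G S g) (e.apply_symm_apply x)).symm
          _ = φ (Y.ρ g (e.symm x)) := (hcomm g _).symm
      refine ⟨⟨⟨FGModuleCat.ofHom (e.symm : S →ₗ[ℂ] Y.V), fun g => by ext x; exact hginv g x⟩, ?_, ?_⟩⟩
      · ext y
        exact e.symm_apply_apply y
      · ext x
        exact e.apply_symm_apply x

lemma ma_eq_sum (a : MonoidAlgebra ℂ G) : a = ∑ g : G, (single g (a.coeff g) : MonoidAlgebra ℂ G) := by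
  ext h
  rw [MonoidAlgebra.coeff_sum, Finsupp.finset_sum_apply]
  simp [Finsupp.single_apply]

lemma central_mul (f : G → ℂ) (hf : ∀ h g : G, f (h * g * h⁻¹) = f g) :
    ∀ b : MonoidAlgebra ℂ G,
      (∑ g : G, (single g (f g⁻¹) : MonoidAlgebra ℂ G)) * b
        = b * (∑ g : G, (single g (f g⁻¹) : MonoidAlgebra ℂ G)) := by
  set a : MonoidAlgebra ℂ G := ∑ g : G, (single g (f g⁻¹) : MonoidAlgebra ℂ G) with ha
  have hsingle : ∀ h : G, a * single h (1:ℂ) = single h (1:ℂ) * a := by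
    intro h
    rw [Finset.sum_mul, Finset.mul_sum]
    simp only [MonoidAlgebra.single_mul_single, one_mul, mul_one]
    refine Fintype.sum_equiv ((Equiv.mulLeft h⁻¹).trans (Equiv.mulRight h))
      (fun x => single (x * h) (f x⁻¹)) (fun x => single (h * x) (f x⁻¹)) fun x => ?_
    simp only [Equiv.trans_apply, Equiv.coe_mulLeft, Equiv.coe_mulRight]
    have e1 : h * (h⁻¹ * x * h) = x * h := by group
    have e2 : f ((h⁻¹ * x * h)⁻¹) = f x⁻¹ := by
      have e3 : (h⁻¹ * x * h)⁻¹ = h⁻¹ * x⁻¹ * (h⁻¹)⁻¹ := by group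
      rw [e3, hf]
    rw [e1, e2]
  intro b
  have hsc : ∀ (h : G) (c : ℂ), a * single h c = single h c * a := by
    intro h c
    have e1 : (single h c : MonoidAlgebra ℂ G) = c • single h (1:ℂ) := by
      rw [MonoidAlgebra.smul_single', mul_one]
    rw [e1, mul_smul_comm, smul_mul_assoc, hsingle]
  conv_lhs => rw [ma_eq_sum b]
  conv_rhs => rw [ma_eq_sum b]
  rw [Finset.mul_sum, Finset.sum_mul]
  exact Finset.sum_congr rfl fun g _ => hsc g (b.coeff g)

lemma central_smul_eq_zero
    (f : G → ℂ) (hf : ∀ h g : G, f (h * g * h⁻¹) = f g)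
    (s : Finset (G → ℂ)) (hs : ∀ χ, χ ∈ s ↔ IsIrrChar G χ)
    (h0 : ∀ χ ∈ s, ∑ g : G, f g * χ g⁻¹ = 0)
    (S : Type) [AddCommGroup S] [Module ℂ S] [Module (MonoidAlgebra ℂ G) S]
    [IsScalarTower ℂ (MonoidAlgebra ℂ G) S] [IsSimpleModule (MonoidAlgebra ℂ G) S] :
    ∀ x : S, (∑ g : G, (single g (f g⁻¹) : MonoidAlgebra ℂ G)) • x = 0 := by
  haveI : Nontrivial S := IsSimpleModule.nontrivial (MonoidAlgebra ℂ G) S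
  -- finite dimensionality
  haveI : Module.Finite (MonoidAlgebra ℂ G) S := by
    obtain ⟨x0, hx0⟩ := exists_ne (0 : S)
    have hspan : Submodule.span (MonoidAlgebra ℂ G) {x0} = ⊤ := by
      rcases eq_bot_or_eq_top (Submodule.span (MonoidAlgebra ℂ G) {x0}) with h | h
      · exfalso
        apply hx0
        have hm : x0 ∈ Submodule.span (MonoidAlgebra ℂ G) {x0} :=
          Submodule.mem_span_singleton_self x0
        rw [h] at hm
        simpa using hm
      · exact h
    exact ⟨⟨{x0}, by simpa using hspan⟩⟩
  haveI hfinA : Module.Finite ℂ (MonoidAlgebra ℂ G) :=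
    Module.Finite.of_basis (MonoidAlgebra.basis G ℂ)
  haveI : FiniteDimensional ℂ S := Module.Finite.trans (MonoidAlgebra ℂ G) S
  set a : MonoidAlgebra ℂ G := ∑ g : G, (single g (f g⁻¹) : MonoidAlgebra ℂ G) with ha
  have hcentral : ∀ b : MonoidAlgebra ℂ G, a * b = b * a := by
    rw [ha]
    exact central_mul f hf
  -- the endomorphism x ↦ a • x
  set T : Module.End ℂ S :=
    { toFun := fun x => a • x
      map_add' := fun x y => smul_add a x y
      map_smul' := fun c x => (smul_comm c a x).symm } with hT
  have hTsum : T = ∑ g : G, f g⁻¹ • (smulRep G S g : S →ₗ[ℂ] S) := by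
    apply LinearMap.ext
    intro x
    have : T x = a • x := rfl
    rw [this, ha, Finset.sum_smul]
    rw [LinearMap.sum_apply]
    refine Finset.sum_congr rfl fun g _ => ?_
    rw [LinearMap.smul_apply, smulRep_apply, ← smul_assoc, MonoidAlgebra.smul_single', mul_one]
  -- χS is an irreducible character
  set χS : G → ℂ := fun g => LinearMap.trace ℂ S (smulRep G S g) with hχS
  have hχmem : χS ∈ s := by
    rw [hs]
    refine ⟨FDRep.of (smulRep G S), simple_smulRep S, ?_⟩
    funext g
    rfl
  -- trace of T is zero
  have hTr : LinearMap.trace ℂ S T = 0 := by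
    rw [hTsum, map_sum]
    have : ∀ g : G, LinearMap.trace ℂ S (f g⁻¹ • (smulRep G S g : S →ₗ[ℂ] S))
        = f g⁻¹ * χS g := by
      intro g
      rw [map_smul]
      rfl
    rw [Finset.sum_congr rfl fun g _ => this g]
    rw [← h0 χS hχmem]
    exact Fintype.sum_equiv (Equiv.inv G) _ _ fun x => by simp
  -- Schur
  obtain ⟨c, hc⟩ := Module.End.exists_eigenvalue T
  obtain ⟨v, hv⟩ := hc.exists_hasEigenvector
  set ν : S →ₗ[MonoidAlgebra ℂ G] S :=
    { toFun := fun x => a • x - c • x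
      map_add' := fun x y => by
        show a • (x + y) - c • (x + y) = (a • x - c • x) + (a • y - c • y)
        rw [smul_add, smul_add]
        abel
      map_smul' := fun b x => by
        show a • (b • x) - c • (b • x) = b • (a • x - c • x)
        rw [smul_sub]
        congr 1
        · rw [← mul_smul, ← mul_smul, hcentral]
        · exact smul_comm c b x } with hν
  have hνv : ν v = 0 := by
    have h1 : T v = c • v := hv.apply_eq_smul
    have h2 : ν v = T v - c • v := rfl
    rw [h2, h1, sub_self]
  have hν0 : ν = 0 := by
    rcases LinearMap.injective_or_eq_zero ν with hinj | h
    · exfalso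
      exact hv.2 (hinj (by rw [hνv, map_zero]))
    · exact h
  have hax : ∀ x : S, a • x = c • x := by
    intro x
    have : ν x = 0 := by rw [hν0]; rfl
    have h2 : a • x - c • x = 0 := this
    exact sub_eq_zero.mp h2
  -- c = 0
  have hc0 : c = 0 := by
    have hTid : T = c • (LinearMap.id : S →ₗ[ℂ] S) := by
      apply LinearMap.ext
      intro x
      exact hax x
    have := hTr
    rw [hTid, map_smul, LinearMap.trace_id] at this
    have hfr : (Module.finrank ℂ S : ℂ) ≠ 0 :=
      Nat.cast_ne_zero.mpr Module.finrank_pos.ne'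
    have : c * (Module.finrank ℂ S : ℂ) = 0 := by
      simpa using this
    rcases mul_eq_zero.mp this with h | h
    · exact h
    · exact absurd h hfr
  intro x
  rw [← ha] at *
  rw [show (a • x : S) = c • x from hax x, hc0, zero_smul]

lemma complete
    (s : Finset (G → ℂ)) (hs : ∀ χ, χ ∈ s ↔ IsIrrChar G χ)
    (f : G → ℂ) (hf : ∀ h g : G, f (h * g * h⁻¹) = f g)
    (h0 : ∀ χ ∈ s, ∑ g : G, f g * χ g⁻¹ = 0) :
    ∀ x : G, f x = 0 := by
  set a : MonoidAlgebra ℂ G := ∑ g : G, (single g (f g⁻¹) : MonoidAlgebra ℂ G) with ha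
  have hcen := central_mul f hf
  have key : ∀ m : Submodule (MonoidAlgebra ℂ G) (MonoidAlgebra ℂ G),
      IsSimpleModule (MonoidAlgebra ℂ G) m → ∀ y ∈ m, a * y = 0 := by
    intro m hm y hy
    haveI := hm
    have h2 := central_smul_eq_zero f hf s hs h0 m ⟨y, hy⟩
    have h3 := congrArg Subtype.val h2
    simpa [smul_eq_mul] using h3
  set p : Submodule (MonoidAlgebra ℂ G) (MonoidAlgebra ℂ G) :=
    { carrier := {b | a * b = 0}
      add_mem' := by
        intro u v hu hv
        show a * (u + v) = 0
        rw [mul_add, hu, hv, add_zero]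
      zero_mem' := by show a * 0 = 0; rw [mul_zero]
      smul_mem' := by
        intro b u hu
        show a * (b • u) = 0
        rw [smul_eq_mul, ← mul_assoc, hcen b, mul_assoc, hu, mul_zero] } with hp
  have hsup : sSup {m : Submodule (MonoidAlgebra ℂ G) (MonoidAlgebra ℂ G)
      | IsSimpleModule (MonoidAlgebra ℂ G) ↥m} = ⊤ :=
    IsSemisimpleModule.sSup_simples_eq_top _ _
  have hle : (⊤ : Submodule (MonoidAlgebra ℂ G) (MonoidAlgebra ℂ G)) ≤ p := by
    rw [← hsup]
    refine sSup_le fun m hm => ?_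
    intro y hy
    exact key m hm y hy
  have ha0 : a = 0 := by
    have h1 : (1 : MonoidAlgebra ℂ G) ∈ p := hle trivial
    have h2 : a * 1 = 0 := h1
    rwa [mul_one] at h2
  have hcoef : ∀ h : G, f h⁻¹ = 0 := by
    intro h
    have h1 : a.coeff h = f h⁻¹ := by
      rw [ha, MonoidAlgebra.coeff_sum, Finsupp.finset_sum_apply]
      simp [Finsupp.single_apply]
    rw [ha0] at h1
    exact h1.symm.trans rfl |>.symm ▸ h1.symm
  intro x
  have := hcoef x⁻¹
  rwa [inv_inv] at this

lemma irrchar_classfun {χ : G → ℂ} (h : IsIrrChar G χ) (c g : G) : χ (c * g * c⁻¹) = χ g := by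
  obtain ⟨V, _, rfl⟩ := h
  exact FDRep.char_conj V g c

lemma orthB_key (V W : FDRep ℂ G) [Simple V] [Simple W] :
    (∑ g : G, V.character g * W.character g⁻¹)
      = if Nonempty (V ≅ W) then (Fintype.card G : ℂ) else 0 := by
  classical
  have hcard : (Fintype.card G : ℂ) ≠ 0 := Nat.cast_ne_zero.mpr Fintype.card_ne_zero
  letI : Invertible ((Nat.card G : ℂ)) := invertibleOfNonzero (by rwa [Nat.card_eq_fintype_card])
  have horth := FDRep.char_orthonormal (k := ℂ) V W
  have h2 := congrArg (fun t => (Nat.card G : ℂ) * t) horth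
  simp only [smul_eq_mul, ← mul_assoc, mul_invOf_self, one_mul, mul_ite, mul_one, mul_zero] at h2
  rw [Nat.card_eq_fintype_card] at h2
  rw [mul_inv_cancel₀ hcard, one_mul] at h2
  exact h2

lemma orthB (s : Finset (G → ℂ)) (hs : ∀ χ, χ ∈ s ↔ IsIrrChar G χ)
    {χ χ' : G → ℂ} (hχ : χ ∈ s) (hχ' : χ' ∈ s) :
    ∑ g : G, χ g * χ' g⁻¹ = if χ = χ' then (Fintype.card G : ℂ) else 0 := by
  classical
  obtain ⟨V, hV, rfl⟩ := (hs χ).mp hχ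
  obtain ⟨W, hW, rfl⟩ := (hs χ').mp hχ'
  haveI := hV
  haveI := hW
  have hcard : (Fintype.card G : ℂ) ≠ 0 := Nat.cast_ne_zero.mpr Fintype.card_ne_zero
  have horth := orthB_key V W
  have horth2 := orthB_key V V
  rw [if_pos ⟨Iso.refl V⟩] at horth2
  by_cases heq : V.character = W.character
  · rw [if_pos heq]
    have hiso : Nonempty (V ≅ W) := by
      by_contra hn
      rw [if_neg hn] at horth
      rw [← heq, horth2] at horth
      exact hcard horth
    rw [if_pos hiso] at horth
    exact horth
  · rw [if_neg heq]
    have hn : ¬ Nonempty (V ≅ W) := fun ⟨i⟩ => heq (FDRep.char_iso i)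
    rw [if_neg hn] at horth
    exact horth

lemma mem_centz_iff {x g : G} : g ∈ Subgroup.centralizer ({x} : Set G) ↔ x * g = g * x := by
  rw [Subgroup.mem_centralizer_iff]
  constructor
  · intro h; exact h x rfl
  · rintro h w hw
    rw [Set.mem_singleton_iff] at hw
    subst hw
    exact h

lemma card_centralizer_conj {x y : G} (h : IsConj x y) :
    Nat.card (Subgroup.centralizer ({x} : Set G)) =
      Nat.card (Subgroup.centralizer ({y} : Set G)) := by
  obtain ⟨c, hc⟩ := isConj_iff.mp h
  have key : ∀ d u v : G, u * v = v * u → (d*u*d⁻¹) * (d*v*d⁻¹) = (d*v*d⁻¹) * (d*u*d⁻¹) := by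
    intro d u v huv
    have e1 : (d*u*d⁻¹) * (d*v*d⁻¹) = d * (u*v) * d⁻¹ := by group
    have e2 : (d*v*d⁻¹) * (d*u*d⁻¹) = d * (v*u) * d⁻¹ := by group
    rw [e1, e2, huv]
  have hx : x = c⁻¹ * y * c⁻¹⁻¹ := by rw [← hc]; group
  refine Nat.card_congr (Equiv.mk ?_ ?_ ?_ ?_)
  · refine fun g => ⟨c * g * c⁻¹, mem_centz_iff.mpr ?_⟩
    have hg := mem_centz_iff.mp g.2
    rw [← hc]
    exact key c x g hg
  · refine fun g => ⟨c⁻¹ * g * c⁻¹⁻¹, mem_centz_iff.mpr ?_⟩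
    have hg := mem_centz_iff.mp g.2
    rw [hx]
    exact key c⁻¹ y g hg
  · intro g; ext; group
  · intro g; ext; group

lemma orbit_stab (x : G) :
    Nat.card {y : G // IsConj x y} * Nat.card (Subgroup.centralizer ({x} : Set G)) =
      Fintype.card G := by
  classical
  haveI : Fintype ↑(MulAction.orbit (ConjAct G) x) := Fintype.ofFinite _
  have h1 := MulAction.card_orbit_mul_card_stabilizer_eq_card_group (ConjAct G) x
  have horb : Fintype.card ↑(MulAction.orbit (ConjAct G) x) = Nat.card {y : G // IsConj x y} := by
    rw [Nat.card_eq_fintype_card]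
    refine Fintype.card_congr (Equiv.subtypeEquivRight fun y => ?_)
    show y ∈ MulAction.orbit (ConjAct G) x ↔ IsConj x y
    constructor
    · rintro ⟨g, rfl⟩
      show IsConj x (g • x)
      rw [ConjAct.smul_def]
      exact isConj_iff.mpr ⟨ConjAct.ofConjAct g, rfl⟩
    · rintro h
      obtain ⟨c, hc⟩ := isConj_iff.mp h
      exact ⟨ConjAct.toConjAct c,
        show (ConjAct.toConjAct c) • x = y by
          rw [ConjAct.smul_def, ConjAct.ofConjAct_toConjAct]; exact hc⟩
  have hstab : Fintype.card ↥(MulAction.stabilizer (ConjAct G) x)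
      = Nat.card (Subgroup.centralizer ({x} : Set G)) := by
    rw [Nat.card_eq_fintype_card]
    refine Fintype.card_congr (Equiv.mk ?_ ?_ ?_ ?_)
    · refine fun g => ⟨ConjAct.ofConjAct g.1, mem_centz_iff.mpr ?_⟩
      have hg := g.2
      rw [MulAction.mem_stabilizer_iff, ConjAct.smul_def] at hg
      calc x * ConjAct.ofConjAct g.1
          = (ConjAct.ofConjAct g.1 * x * (ConjAct.ofConjAct g.1)⁻¹) * ConjAct.ofConjAct g.1 := by
            rw [hg]
        _ = ConjAct.ofConjAct g.1 * x := by group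
    · refine fun g => ⟨ConjAct.toConjAct g.1, ?_⟩
      rw [MulAction.mem_stabilizer_iff, ConjAct.smul_def, ConjAct.ofConjAct_toConjAct]
      have hg := mem_centz_iff.mp g.2
      rw [← hg]
      group
    · intro g; ext; simp
    · intro g; ext; simp
  have hG : Fintype.card (ConjAct G) = Fintype.card G :=
    Fintype.card_congr ConjAct.toConjAct.symm.toEquiv
  rw [horb, hstab, hG] at h1
  exact h1

lemma card_filter_mul_Z (x : G) :
    ((Finset.univ.filter (fun w : G => IsConj x w)).card : ℂ)
      * (Nat.card (Subgroup.centralizer ({x} : Set G)) : ℂ) = (Fintype.card G : ℂ) := by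
  have h2 : (Finset.univ.filter (fun w : G => IsConj x w)).card
      = Nat.card {w : G // IsConj x w} := by
    rw [Nat.card_eq_fintype_card]
    exact (Fintype.card_subtype _).symm
  rw [h2]
  exact_mod_cast congrArg (Nat.cast : ℕ → ℂ) (orbit_stab x)

lemma colOrth (s : Finset (G → ℂ)) (hs : ∀ χ, χ ∈ s ↔ IsIrrChar G χ) (y x : G) :
    (∑ χ ∈ s, χ x * χ y)
      = if IsConj y⁻¹ x then (Nat.card (Subgroup.centralizer ({x} : Set G)) : ℂ) else 0 := by
  set Z : G → ℂ := fun x => (Nat.card (Subgroup.centralizer ({x} : Set G)) : ℂ) with hZ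
  set F : G → ℂ := fun x => (∑ χ ∈ s, χ x * χ y) - (if IsConj y⁻¹ x then Z x else 0) with hF
  have hclass : ∀ c g : G, F (c * g * c⁻¹) = F g := by
    intro c g
    have hconj : IsConj g (c * g * c⁻¹) := isConj_iff.mpr ⟨c, rfl⟩
    have h2 : IsConj y⁻¹ (c * g * c⁻¹) ↔ IsConj y⁻¹ g :=
      ⟨fun h => h.trans hconj.symm, fun h => h.trans hconj⟩
    have h3 : Z (c * g * c⁻¹) = Z g :=
      congrArg (Nat.cast : ℕ → ℂ) (card_centralizer_conj hconj.symm)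
    show (∑ χ ∈ s, χ (c * g * c⁻¹) * χ y) - (if IsConj y⁻¹ (c * g * c⁻¹) then Z (c * g * c⁻¹) else 0)
      = (∑ χ ∈ s, χ g * χ y) - (if IsConj y⁻¹ g then Z g else 0)
    rw [Finset.sum_congr rfl fun χ hχ => by rw [irrchar_classfun ((hs χ).mp hχ) c g]]
    rw [if_congr h2 h3 rfl]
  have h0 : ∀ χ0 ∈ s, ∑ g : G, F g * χ0 g⁻¹ = 0 := by
    intro χ0 hχ0
    have hA : ∑ g : G, (∑ χ ∈ s, χ g * χ y) * χ0 g⁻¹ = (Fintype.card G : ℂ) * χ0 y := by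
      have e1 : ∀ g : G, (∑ χ ∈ s, χ g * χ y) * χ0 g⁻¹ = ∑ χ ∈ s, (χ g * χ0 g⁻¹) * χ y := by
        intro g
        rw [Finset.sum_mul]
        exact Finset.sum_congr rfl fun χ _ => by ring
      rw [Finset.sum_congr rfl fun g _ => e1 g, Finset.sum_comm]
      have e2 : ∀ χ ∈ s, (∑ g : G, (χ g * χ0 g⁻¹) * χ y)
          = if χ = χ0 then (Fintype.card G : ℂ) * χ y else 0 := by
        intro χ hχ
        rw [← Finset.sum_mul, orthB s hs hχ hχ0, ite_mul, zero_mul]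
      rw [Finset.sum_congr rfl e2, Finset.sum_ite_eq' s χ0, if_pos hχ0]
    have hB : ∑ g : G, (if IsConj y⁻¹ g then Z g else 0) * χ0 g⁻¹
        = (Fintype.card G : ℂ) * χ0 y := by
      have hterm : ∀ g : G, (if IsConj y⁻¹ g then Z g else 0) * χ0 g⁻¹
          = if IsConj y⁻¹ g then Z y⁻¹ * χ0 y else 0 := by
        intro g
        split_ifs with h
        · obtain ⟨c, hc⟩ := isConj_iff.mp h
          have hZg : Z g = Z y⁻¹ := congrArg (Nat.cast : ℕ → ℂ) (card_centralizer_conj h.symm)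
          have hinv : g⁻¹ = c * y * c⁻¹ := by rw [← hc]; group
          have hχg : χ0 g⁻¹ = χ0 y := by
            rw [hinv]; exact irrchar_classfun ((hs χ0).mp hχ0) c y
          rw [hZg, hχg]
        · exact zero_mul _
      rw [Finset.sum_congr rfl fun g _ => hterm g, Finset.sum_ite, Finset.sum_const_zero,
        add_zero, Finset.sum_const, nsmul_eq_mul]
      calc ((Finset.univ.filter (fun g : G => IsConj y⁻¹ g)).card : ℂ) * (Z y⁻¹ * χ0 y)
          = (((Finset.univ.filter (fun g : G => IsConj y⁻¹ g)).card : ℂ) * Z y⁻¹) * χ0 y := by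
            ring
        _ = (Fintype.card G : ℂ) * χ0 y := by rw [card_filter_mul_Z y⁻¹]
    have hsplit : ∑ g : G, F g * χ0 g⁻¹
        = (∑ g : G, (∑ χ ∈ s, χ g * χ y) * χ0 g⁻¹)
          - ∑ g : G, (if IsConj y⁻¹ g then Z g else 0) * χ0 g⁻¹ := by
      rw [← Finset.sum_sub_distrib]
      refine Finset.sum_congr rfl fun g _ => ?_
      simp only [hF]
      ring
    rw [hsplit, hA, hB, sub_self]
  have := complete s hs F hclass h0 x
  have h4 : (∑ χ ∈ s, χ x * χ y) - (if IsConj y⁻¹ x then Z x else 0) = 0 := this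
  exact sub_eq_zero.mp h4

lemma mul3 {α : Type} (t : Finset α) (a b c : α → ℂ) :
    (∑ r ∈ t, ∑ p ∈ t, ∑ q ∈ t, a p * b q * c r)
      = (∑ p ∈ t, a p) * (∑ q ∈ t, b q) * (∑ r ∈ t, c r) := by
  simp only [← Finset.sum_mul, ← Finset.mul_sum]

end StmtAux

theorem stmt0 (G : Type) [Group G] [Fintype G] [DecidableEq G]
    (s : Finset (G → ℂ)) (hs : ∀ χ, χ ∈ s ↔ IsIrrChar G χ) :
    ∑ ρ ∈ s, ∑ φ ∈ s, ∑ ψ ∈ s, (kron G ρ φ ψ) ^ 2 =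
      ∑ α : ConjClasses G,
        (Nat.card (Subgroup.centralizer {Quotient.out α} : Subgroup G) : ℂ) := by
  classical
  set N := (Fintype.card G : ℂ) with hN
  have hN0 : N ≠ 0 := Nat.cast_ne_zero.mpr Fintype.card_ne_zero
  set Z : G → ℂ := fun x => (Nat.card (Subgroup.centralizer ({x} : Set G)) : ℂ) with hZ
  -- Step 1: expand the square of kron
  have step1 : ∀ ρ φ ψ : G → ℂ, (kron G ρ φ ψ)^2
      = N⁻¹ * N⁻¹ * ∑ x : G, ∑ y : G,
          (φ x * φ y) * (ψ x * ψ y) * ((starRingEnd ℂ) (ρ x) * (starRingEnd ℂ) (ρ y)) := by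
    intro ρ φ ψ
    have h1 : kron G ρ φ ψ = N⁻¹ * ∑ x : G, φ x * ψ x * (starRingEnd ℂ) (ρ x) := rfl
    rw [h1, sq, mul_mul_mul_comm, Finset.sum_mul_sum]
    congr 1
    exact Finset.sum_congr rfl fun x _ => Finset.sum_congr rfl fun y _ => by ring
  -- the summand
  set T : (G → ℂ) → (G → ℂ) → (G → ℂ) → G → G → ℂ := fun ρ φ ψ x y =>
    (φ x * φ y) * (ψ x * ψ y) * ((starRingEnd ℂ) (ρ x) * (starRingEnd ℂ) (ρ y)) with hT
  have swap2 : ∀ {β γ : Type} (t1 : Finset β) (t2 : Finset γ) (f : β → γ → ℂ),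
      (∑ b ∈ t1, ∑ c ∈ t2, f b c) = ∑ c ∈ t2, ∑ b ∈ t1, f b c :=
    fun t1 t2 f => Finset.sum_comm
  have interchange :
      (∑ ρ ∈ s, ∑ φ ∈ s, ∑ ψ ∈ s, ∑ x : G, ∑ y : G, T ρ φ ψ x y)
        = ∑ x : G, ∑ y : G, ∑ ρ ∈ s, ∑ φ ∈ s, ∑ ψ ∈ s, T ρ φ ψ x y := by
    calc (∑ ρ ∈ s, ∑ φ ∈ s, ∑ ψ ∈ s, ∑ x : G, ∑ y : G, T ρ φ ψ x y)
        = ∑ ρ ∈ s, ∑ φ ∈ s, ∑ x : G, ∑ y : G, ∑ ψ ∈ s, T ρ φ ψ x y := by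
          refine Finset.sum_congr rfl fun ρ _ => Finset.sum_congr rfl fun φ _ => ?_
          rw [swap2]
          exact Finset.sum_congr rfl fun x _ => swap2 _ _ _
      _ = ∑ ρ ∈ s, ∑ x : G, ∑ y : G, ∑ φ ∈ s, ∑ ψ ∈ s, T ρ φ ψ x y := by
          refine Finset.sum_congr rfl fun ρ _ => ?_
          rw [swap2]
          exact Finset.sum_congr rfl fun x _ => swap2 _ _ _
      _ = ∑ x : G, ∑ y : G, ∑ ρ ∈ s, ∑ φ ∈ s, ∑ ψ ∈ s, T ρ φ ψ x y := by
          rw [swap2]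
          exact Finset.sum_congr rfl fun x _ => swap2 _ _ _
  -- per (x, y) value
  have hconjS : ∀ x y : G, (∑ ρ ∈ s, (starRingEnd ℂ) (ρ x) * (starRingEnd ℂ) (ρ y))
      = (starRingEnd ℂ) (∑ ρ ∈ s, ρ x * ρ y) := by
    intro x y
    rw [map_sum]
    exact Finset.sum_congr rfl fun ρ _ => (map_mul _ _ _).symm
  have hval : ∀ x y : G, (∑ ρ ∈ s, ∑ φ ∈ s, ∑ ψ ∈ s, T ρ φ ψ x y)
      = if IsConj y⁻¹ x then Z x ^ 3 else 0 := by
    intro x y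
    rw [show (∑ ρ ∈ s, ∑ φ ∈ s, ∑ ψ ∈ s, T ρ φ ψ x y)
        = (∑ φ ∈ s, φ x * φ y) * (∑ ψ ∈ s, ψ x * ψ y)
          * (∑ ρ ∈ s, (starRingEnd ℂ) (ρ x) * (starRingEnd ℂ) (ρ y)) from
      mul3 s (fun φ => φ x * φ y) (fun ψ => ψ x * ψ y)
        (fun ρ => (starRingEnd ℂ) (ρ x) * (starRingEnd ℂ) (ρ y))]
    rw [hconjS, colOrth s hs y x]
    simp only [hZ]
    split_ifs with h
    · rw [map_natCast]
      ring
    · simp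
  -- sum over y
  have hsumy : ∀ x : G, (∑ y : G, if IsConj y⁻¹ x then Z x ^ 3 else 0) = N * Z x ^ 2 := by
    intro x
    rw [Finset.sum_ite, Finset.sum_const_zero, add_zero, Finset.sum_const, nsmul_eq_mul]
    have hcard : ((Finset.univ.filter (fun y : G => IsConj y⁻¹ x)).card : ℂ)
        = ((Finset.univ.filter (fun w : G => IsConj x w)).card : ℂ) := by
      norm_cast
      apply Finset.card_nbij' (fun y => y⁻¹) (fun w => w⁻¹)
      · intro y hy
        simp only [Finset.mem_coe, Finset.mem_filter, Finset.mem_univ, true_and] at hy ⊢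
        exact isConj_comm.mp hy
      · intro w hw
        simp only [Finset.mem_coe, Finset.mem_filter, Finset.mem_univ, true_and] at hw ⊢
        rw [inv_inv]
        exact isConj_comm.mp hw
      · intro y _; exact inv_inv y
      · intro w _; exact inv_inv w
    rw [hcard]
    calc ((Finset.univ.filter (fun w : G => IsConj x w)).card : ℂ) * Z x ^ 3
        = (((Finset.univ.filter (fun w : G => IsConj x w)).card : ℂ) * Z x) * Z x ^ 2 := by ring
      _ = N * Z x ^ 2 := by rw [card_filter_mul_Z x]
  -- fiberwise sum over conjugacy classes
  have hfiber : (∑ x : G, Z x ^ 2) = N * ∑ α : ConjClasses G, Z (Quotient.out α) := by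
    rw [← Finset.sum_fiberwise Finset.univ (fun x : G => ConjClasses.mk x) (fun x => Z x ^ 2)]
    rw [Finset.mul_sum]
    refine Finset.sum_congr rfl fun α _ => ?_
    have hout : ConjClasses.mk (Quotient.out α) = α := Quotient.out_eq α
    have hmem : ∀ x ∈ Finset.univ.filter (fun x : G => ConjClasses.mk x = α),
        Z x = Z (Quotient.out α) := by
      intro x hx
      rw [Finset.mem_filter] at hx
      have : IsConj x (Quotient.out α) := by
        rw [← ConjClasses.mk_eq_mk_iff_isConj, hout, hx.2]
      exact congrArg (Nat.cast : ℕ → ℂ) (card_centralizer_conj this)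
    rw [Finset.sum_congr rfl fun x hx => by rw [hmem x hx]]
    rw [Finset.sum_const, nsmul_eq_mul]
    have hfilter : Finset.univ.filter (fun x : G => ConjClasses.mk x = α)
        = Finset.univ.filter (fun x : G => IsConj (Quotient.out α) x) := by
      refine Finset.filter_congr fun x _ => ?_
      constructor
      · intro hm
        have h1 : IsConj x (Quotient.out α) := by
          rw [← ConjClasses.mk_eq_mk_iff_isConj, hout]
          exact hm
        exact isConj_comm.mp h1
      · intro hc
        exact (ConjClasses.mk_eq_mk_iff_isConj.mpr (isConj_comm.mp hc)).trans hout
    rw [hfilter]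
    calc ((Finset.univ.filter (fun x : G => IsConj (Quotient.out α) x)).card : ℂ)
          * Z (Quotient.out α) ^ 2
        = (((Finset.univ.filter (fun x : G => IsConj (Quotient.out α) x)).card : ℂ)
          * Z (Quotient.out α)) * Z (Quotient.out α) := by ring
      _ = N * Z (Quotient.out α) := by rw [card_filter_mul_Z]
  -- assemble
  calc ∑ ρ ∈ s, ∑ φ ∈ s, ∑ ψ ∈ s, (kron G ρ φ ψ) ^ 2
      = ∑ ρ ∈ s, ∑ φ ∈ s, ∑ ψ ∈ s, N⁻¹ * N⁻¹ * ∑ x : G, ∑ y : G, T ρ φ ψ x y := by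
        exact Finset.sum_congr rfl fun ρ _ => Finset.sum_congr rfl fun φ _ =>
          Finset.sum_congr rfl fun ψ _ => step1 ρ φ ψ
    _ = N⁻¹ * N⁻¹ * ∑ ρ ∈ s, ∑ φ ∈ s, ∑ ψ ∈ s, ∑ x : G, ∑ y : G, T ρ φ ψ x y := by
        simp only [← Finset.mul_sum]
    _ = N⁻¹ * N⁻¹ * ∑ x : G, ∑ y : G, ∑ ρ ∈ s, ∑ φ ∈ s, ∑ ψ ∈ s, T ρ φ ψ x y := by
        rw [interchange]
    _ = N⁻¹ * N⁻¹ * ∑ x : G, (N * Z x ^ 2) := by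
        congr 1
        refine Finset.sum_congr rfl fun x _ => ?_
        rw [Finset.sum_congr rfl fun y _ => hval x y]
        exact hsumy x
    _ = N⁻¹ * ∑ x : G, Z x ^ 2 := by
        rw [← Finset.mul_sum]
        field_simp
    _ = ∑ α : ConjClasses G, (Nat.card (Subgroup.centralizer {Quotient.out α} : Subgroup G) : ℂ) := by
        rw [hfiber, ← mul_assoc, inv_mul_cancel₀ hN0, one_mul]
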